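/- For variables $\mu_1,\dots,\mu_{N-1}$ and $\lambda_1,\dots,\lambda_N$ (all distinct appropriately), the sum $\sum_{i=1}^{N-1} \frac{\prod_{l\neq j}(\lambda_l-\mu_i)}{\prod_{l\neq i}(\mu_l-\mu_i)}$ equals $\sum_{i\neq j}\lambda_i - \sum_{i=1}^{N-1}\mu_i$, for each fixed $j\in\{1,\dots,N\}$. -/

import Mathlib

open Finset Polynomial

lemma prod_neg_aux {α : Type*} (s : Finset α) (f : α → ℂ) :
    ∏ l ∈ s, (-f l) = (-1) ^ #s * ∏ l ∈ s, f l := by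
  rw [Finset.prod_congr rfl (fun l _ => (neg_one_mul (f l)).symm),
    Finset.prod_mul_distrib, Finset.prod_const]

lemma basis_coeff_aux (n : ℕ) (μ : Fin n → ℂ) (i : Fin n) :
    (Lagrange.basis univ μ i).coeff (n - 1) = (∏ l ∈ univ.erase i, (μ i - μ l))⁻¹ := by
  rw [Lagrange.basis]
  simp only [Lagrange.basisDivisor]
  rw [Finset.prod_mul_distrib, ← map_prod, coeff_C_mul]
  have hmon : (∏ l ∈ univ.erase i, (X - C (μ l))).Monic :=
    monic_prod_of_monic _ _ fun _ _ => monic_X_sub_C _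
  have hdeg : (∏ l ∈ univ.erase i, (X - C (μ l))).natDegree = n - 1 := by
    rw [natDegree_prod_of_monic _ _ fun _ _ => monic_X_sub_C _]
    simp [Finset.card_erase_of_mem]
  rw [← hdeg, hmon.coeff_natDegree, mul_one, ← Finset.prod_inv_distrib]

/-- For pairwise distinct `μ₁, …, μ_{N-1}` and `λ₁, …, λ_N`, and any fixed `j`,
`∑_{i=1}^{N-1} ∏_{l≠j}(λ_l - μ_i) / ∏_{l≠i}(μ_l - μ_i) = ∑_{l≠j} λ_l - ∑_i μ_i`. -/
theorem stmt0 (n : ℕ) (μ : Fin n → ℂ) (lam : Fin (n + 1) → ℂ)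
    (hμ : Function.Injective μ) (j : Fin (n + 1)) :
    ∑ i : Fin n, (∏ l ∈ univ \ {j}, (lam l - μ i)) / (∏ l ∈ univ \ {i}, (μ l - μ i))
      = (∑ l ∈ univ \ {j}, lam l) - ∑ i : Fin n, μ i := by
  classical
  rcases Nat.eq_zero_or_pos n with rfl | hn
  · have hj : j = 0 := Fin.fin_one_eq_zero j
    simp [hj]
  -- set up
  have hcard : #((univ : Finset (Fin (n+1))) \ {j}) = n := by
    rw [Finset.sdiff_singleton_eq_erase, Finset.card_erase_of_mem (mem_univ j)]
    simp
  set M : ℂ[X] := ∏ l ∈ univ \ {j}, (X - C (lam l)) with hMdef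
  set Nd : ℂ[X] := ∏ i : Fin n, (X - C (μ i)) with hNdef
  have hMmon : M.Monic := monic_prod_of_monic _ _ fun _ _ => monic_X_sub_C _
  have hNmon : Nd.Monic := monic_prod_of_monic _ _ fun _ _ => monic_X_sub_C _
  have hMdeg : M.natDegree = n := by
    rw [hMdef, natDegree_prod_of_monic _ _ fun _ _ => monic_X_sub_C _]
    simp [hcard]
  have hNdeg : Nd.natDegree = n := by
    rw [hNdef, natDegree_prod_of_monic _ _ fun _ _ => monic_X_sub_C _]
    simp
  have hMd : M.degree = (n : WithBot ℕ) := by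
    rw [degree_eq_natDegree hMmon.ne_zero, hMdeg]
  have hNd : Nd.degree = (n : WithBot ℕ) := by
    rw [degree_eq_natDegree hNmon.ne_zero, hNdeg]
  set r : Fin n → ℂ := fun i => ∏ l ∈ univ \ {j}, (μ i - lam l) with hrdef
  have key : M - Nd = Lagrange.interpolate univ μ r := by
    apply Lagrange.eq_interpolate_of_eval_eq _ hμ.injOn
    · rw [Finset.card_univ, Fintype.card_fin]
      calc (M - Nd).degree < M.degree := by
            apply degree_sub_lt (hMd.trans hNd.symm) hMmon.ne_zero
            rw [hMmon.leadingCoeff, hNmon.leadingCoeff]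
        _ = (n : WithBot ℕ) := hMd
    · intro i _
      rw [eval_sub, hMdef, hNdef, eval_prod, eval_prod]
      simp only [eval_sub, eval_X, eval_C]
      rw [Finset.prod_eq_zero (mem_univ i) (by ring)]
      simp [hrdef]
  -- compare coefficient n-1
  have hc : (M - Nd).coeff (n - 1)
      = ∑ i : Fin n, r i * (∏ l ∈ univ.erase i, (μ i - μ l))⁻¹ := by
    rw [key, Lagrange.interpolate_apply, Polynomial.finset_sum_coeff]
    refine Finset.sum_congr rfl fun i _ => ?_
    rw [coeff_C_mul, basis_coeff_aux]
  have hMc : M.coeff (n - 1) = -∑ l ∈ univ \ {j}, lam l := by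
    have := prod_X_sub_C_coeff_card_pred (univ \ {j}) lam (by rw [hcard]; exact hn)
    rwa [hcard] at this
  have hNc : Nd.coeff (n - 1) = -∑ i : Fin n, μ i := by
    have := prod_X_sub_C_coeff_card_pred (univ : Finset (Fin n)) μ (by simp [hn])
    simpa using this
  rw [coeff_sub, hMc, hNc] at hc
  -- now massage the goal
  have hterm : ∀ i : Fin n,
      (∏ l ∈ univ \ {j}, (lam l - μ i)) / (∏ l ∈ univ \ {i}, (μ l - μ i))
        = -(r i * (∏ l ∈ univ.erase i, (μ i - μ l))⁻¹) := by
    intro i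
    have h1 : ∏ l ∈ univ \ {j}, (lam l - μ i) = (-1 : ℂ) ^ n * r i := by
      have : ∀ l ∈ univ \ {j}, lam l - μ i = -(μ i - lam l) := fun l _ => by ring
      rw [Finset.prod_congr rfl this, prod_neg_aux, hcard]
    have h2 : ∏ l ∈ univ \ {i}, (μ l - μ i)
        = (-1 : ℂ) ^ (n - 1) * ∏ l ∈ univ.erase i, (μ i - μ l) := by
      rw [Finset.sdiff_singleton_eq_erase]
      have hce : #((univ : Finset (Fin n)).erase i) = n - 1 := by
        rw [Finset.card_erase_of_mem (mem_univ i)]; simp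
      have : ∀ l ∈ univ.erase i, μ l - μ i = -(μ i - μ l) := fun l _ => by ring
      rw [Finset.prod_congr rfl this, prod_neg_aux, hce]
    rw [h1, h2, div_eq_mul_inv, mul_inv, ← mul_assoc]
    have hpow : (-1 : ℂ) ^ n * ((-1 : ℂ) ^ (n - 1))⁻¹ = -1 := by
      rw [← inv_pow, inv_neg, inv_one, ← pow_add,
        show n + (n - 1) = 2 * (n - 1) + 1 by omega, pow_succ, pow_mul]
      simp
    rw [mul_comm ((-1:ℂ)^n) (r i), mul_assoc, mul_assoc, ← mul_assoc ((-1:ℂ)^n), hpow]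
    ring
  simp_rw [hterm]
  rw [Finset.sum_neg_distrib, ← hc]
  ring
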